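/- Let X be a metric surface (a compact metric space homeomorphic to a smooth surface) and, for each n ∈ ℕ, let X_{1/n} be a (1/n)-thickening of X containing X isometrically as a subset. Then there exists n ∈ ℕ and a continuous retraction R: X_{1/n} → X, i.e. a continuous map with R|_X = id_X. -/

import Mathlib

/-!
Common definitions for formalizing "Quasiconformal uniformization of metric
surfaces of higher topology" (D. Meier).
-/

open Set MeasureTheory Filter
open scoped Manifold Topology ENNReal NNReal

noncomputable section

/-! ### Hausdorff measures -/

/-- The Hausdorff `d`-measure on a metric space, with the Borel σ-algebra. -/
noncomputable def hMeasure (d : ℝ) (X : Type*) [MetricSpace X] :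
    @MeasureTheory.Measure X (borel X) :=
  letI : MeasurableSpace X := borel X
  haveI : BorelSpace X := ⟨rfl⟩
  MeasureTheory.Measure.hausdorffMeasure d

/-- Hausdorff 2-measure. -/
noncomputable abbrev hausdorff2 (X : Type*) [MetricSpace X] := hMeasure 2 X

/-- Hausdorff 1-measure. -/
noncomputable abbrev hausdorff1 (X : Type*) [MetricSpace X] := hMeasure 1 X

/-! ### Curves, length, line integrals, modulus -/

/-- A (parametrized) curve in `X`: a map on a compact interval `[a,b]`. -/
structure Curve (X : Type*) where
  a : ℝ
  b : ℝ
  hab : a ≤ b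
  toFun : ℝ → X

/-- The length of a curve: its total variation. -/
noncomputable def Curve.length {X : Type*} [PseudoEMetricSpace X] (γ : Curve X) : ℝ≥0∞ :=
  eVariationOn γ.toFun (Set.Icc γ.a γ.b)

/-- A curve is continuous if its parametrization is continuous on `[a,b]`. -/
def Curve.IsCont {X : Type*} [TopologicalSpace X] (γ : Curve X) : Prop :=
  ContinuousOn γ.toFun (Set.Icc γ.a γ.b)

/-- The line integral `∫_γ ρ` of a Borel function `ρ : X → [0,∞]` along a (rectifiable)
curve, computed through the arclength (natural) parametrization of the curve. -/
noncomputable def Curve.integral {X : Type*} [PseudoEMetricSpace X] (γ : Curve X)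
    (ρ : X → ℝ≥0∞) : ℝ≥0∞ :=
  ∫⁻ t in Set.Icc (0 : ℝ) γ.length.toReal,
    ρ (naturalParameterization γ.toFun (Set.Icc γ.a γ.b) γ.a t)

/-- Postcomposition of a curve with a map. -/
def Curve.comp {X Y : Type*} (u : X → Y) (γ : Curve X) : Curve Y :=
  ⟨γ.a, γ.b, γ.hab, u ∘ γ.toFun⟩

/-- `ρ` is admissible for the curve family `Γ`: `∫_γ ρ ≥ 1` for every
(locally) rectifiable continuous curve in `Γ`. -/
def Admissible {X : Type*} [MetricSpace X] (ρ : X → ℝ≥0∞) (Γ : Set (Curve X)) : Prop :=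
  ∀ γ ∈ Γ, γ.IsCont → γ.length ≠ ⊤ → 1 ≤ γ.integral ρ

/-- The conformal modulus of a family of curves in a metric space `X`, with respect to
the Hausdorff `2`-measure of `X`. -/
noncomputable def modulus {X : Type*} [MetricSpace X] (Γ : Set (Curve X)) : ℝ≥0∞ :=
  ⨅ (ρ : X → ℝ≥0∞) (_ : @Measurable X ℝ≥0∞ (borel X) _ ρ) (_ : Admissible ρ Γ),
    ∫⁻ x, (ρ x) ^ 2 ∂(hausdorff2 X)

/-- Modulus with respect to an explicitly given metric (used for a Riemannian surface). -/
noncomputable def modulusW {M : Type*} (m : MetricSpace M) (Γ : Set (Curve M)) : ℝ≥0∞ :=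
  letI := m; modulus Γ

noncomputable def Curve.lengthW {M : Type*} (m : MetricSpace M) (γ : Curve M) : ℝ≥0∞ :=
  letI := m; γ.length

noncomputable def Curve.integralW {M : Type*} (m : MetricSpace M) (γ : Curve M)
    (ρ : M → ℝ≥0∞) : ℝ≥0∞ :=
  letI := m; γ.integral ρ

/-! ### Geodesic conditions -/

/-- A metric space is locally geodesic if every point has a neighborhood `U` such that
any two points of `U` are joined by a curve (in `X`) whose length equals their distance. -/
def IsLocallyGeodesicSpace (X : Type*) [MetricSpace X] : Prop :=
  ∀ x : X, ∃ U ∈ 𝓝 x, ∀ y ∈ U, ∀ z ∈ U, ∃ γ : Curve X,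
    γ.IsCont ∧ γ.toFun γ.a = y ∧ γ.toFun γ.b = z ∧ γ.length = edist y z

/-- A metric space is geodesic if any two points are joined by a geodesic. -/
def IsGeodesicSpace (X : Type*) [MetricSpace X] : Prop :=
  ∀ y z : X, ∃ γ : Curve X,
    γ.IsCont ∧ γ.toFun γ.a = y ∧ γ.toFun γ.b = z ∧ γ.length = edist y z

/-! ### Monotone maps -/

/-- A map is monotone (in the sense of continua theory) if every point preimage
is connected. -/
def IsMonotoneMap {M X : Type*} [TopologicalSpace M] [TopologicalSpace X] (u : M → X) : Prop :=
  ∀ x : X, IsConnected (u ⁻¹' {x})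

/-! ### biLipschitz maps -/

/-- `f` is biLipschitz on `s` with respect to the given distance functions. -/
def BiLipschitzOnW {Z Y : Type*} (dZ : Z → Z → ℝ) (dY : Y → Y → ℝ)
    (f : Z → Y) (s : Set Z) : Prop :=
  ∃ L : ℝ, 1 ≤ L ∧ ∀ p ∈ s, ∀ q ∈ s,
    dZ p q ≤ L * dY (f p) (f q) ∧ dY (f p) (f q) ≤ L * dZ p q

/-- `f` is biLipschitz on `s` (instance-based version). -/
def BiLipschitzOn {Z Y : Type*} [PseudoMetricSpace Z] [PseudoMetricSpace Y]
    (f : Z → Y) (s : Set Z) : Prop :=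
  BiLipschitzOnW dist dist f s

/-! ### Smooth surfaces -/

/-- The boundary `∂M` of a surface `M`, modelled on the Euclidean half-plane. -/
def surfaceBoundary (M : Type*) [TopologicalSpace M]
    [ChartedSpace (EuclideanHalfSpace 2) M] : Set M :=
  (𝓡∂ 2).boundary M


/-- The velocity vector of a curve `γ : ℝ → M` at time `t` (the tangent space of the
surface `M` is definitionally `EuclideanSpace ℝ (Fin 2)`). -/
noncomputable def curveVelocity {M : Type*} [TopologicalSpace M]
    [ChartedSpace (EuclideanHalfSpace 2) M] (γ : ℝ → M) (t : ℝ) :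
    EuclideanSpace ℝ (Fin 2) :=
  mfderiv (𝓘(ℝ, ℝ)) (𝓡∂ 2) γ t (show TangentSpace (𝓘(ℝ, ℝ)) t from (1 : ℝ))

/-- A Riemannian metric on a smooth surface `M` (modelled on the half-plane
`EuclideanHalfSpace 2`; the tangent space at every point is definitionally
`EuclideanSpace ℝ (Fin 2)`). It is recorded together with the metric-space structure it
induces: a smooth family of inner products on the tangent spaces, such that the distance
between two points is the infimum of the lengths of `C¹` curves joining them. -/
structure RiemannianMetric (M : Type*) [tM : TopologicalSpace M]
    [ChartedSpace (EuclideanHalfSpace 2) M] extends MetricSpace M where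
  /-- The induced metric induces the manifold topology. -/
  compat : toMetricSpace.toUniformSpace.toTopologicalSpace = tM
  /-- The inner product on the tangent space at each point, as a continuous bilinear form. -/
  innerCLM : M → EuclideanSpace ℝ (Fin 2) →L[ℝ] EuclideanSpace ℝ (Fin 2) →L[ℝ] ℝ
  smooth : ContMDiff (𝓡∂ 2)
    (𝓘(ℝ, EuclideanSpace ℝ (Fin 2) →L[ℝ] EuclideanSpace ℝ (Fin 2) →L[ℝ] ℝ)) (⊤ : ℕ∞) innerCLM
  symm : ∀ x u v, innerCLM x u v = innerCLM x v u
  posdef : ∀ (x : M) (v : EuclideanSpace ℝ (Fin 2)), v ≠ 0 → 0 < innerCLM x v v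
  /-- The distance is the infimum of Riemannian lengths of `C¹` curves. -/
  dist_eq : ∀ x y : M, ENNReal.ofReal (toMetricSpace.dist x y) =
    ⨅ (γ : ℝ → M) (_ : ContinuousOn γ (Set.Icc 0 1))
      (_ : ContMDiffOn (𝓘(ℝ, ℝ)) (𝓡∂ 2) 1 γ (Set.Icc 0 1))
      (_ : γ 0 = x) (_ : γ 1 = y),
      ∫⁻ t in Set.Icc (0 : ℝ) 1, ENNReal.ofReal
        (Real.sqrt (innerCLM (γ t) (curveVelocity γ t) (curveVelocity γ t)))

namespace RiemannianMetric

variable {M : Type*} [TopologicalSpace M] [ChartedSpace (EuclideanHalfSpace 2) M]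

/-- The underlying metric space structure. -/
noncomputable def ms (g : RiemannianMetric M) : MetricSpace M := g.toMetricSpace

/-- The Riemannian distance function. -/
noncomputable def distFn (g : RiemannianMetric M) : M → M → ℝ :=
  letI := g.ms; fun x y => dist x y

/-- The Riemannian (Hausdorff) area measure `H²_g` on `M`. -/
noncomputable def area (g : RiemannianMetric M) := @hausdorff2 M g.ms

end RiemannianMetric

/-! ### Weakly monotone parametrizations -/

/-- `f : S → X` is a weakly monotone parametrization of `B ⊆ X`: a uniform limit of
homeomorphisms from `S` onto `B` (here: continuous injections with range `B`;
on a compact Hausdorff domain these are exactly the homeomorphisms onto `B`). -/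
def WeaklyMonotoneParam {S X : Type*} [TopologicalSpace S] [MetricSpace X]
    (B : Set X) (f : S → X) : Prop :=
  ∃ F : ℕ → S → X,
    (∀ n, Continuous (F n) ∧ Function.Injective (F n) ∧ Set.range (F n) = B) ∧
    TendstoUniformly F f Filter.atTop

/-! ### Newton–Sobolev maps, upper gradients, energy -/

section Sobolev

variable {M X : Type*}

/-- `ρ` is a weak upper gradient of `u : M → X`, with respect to the metric `m` on `M`:
the upper gradient inequality holds along all rectifiable curves outside a family of
modulus zero. -/
def IsWeakUpperGradientW (m : MetricSpace M) [MetricSpace X] (u : M → X)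
    (ρ : M → ℝ≥0∞) : Prop :=
  (@Measurable M ℝ≥0∞ (@borel M m.toUniformSpace.toTopologicalSpace) _ ρ) ∧
  ∃ Γ₀ : Set (Curve M), modulusW m Γ₀ = 0 ∧
    ∀ γ : Curve M, γ ∉ Γ₀ → (letI := m; γ.IsCont) → γ.lengthW m ≠ ⊤ →
      edist (u (γ.toFun γ.a)) (u (γ.toFun γ.b)) ≤ γ.integralW m ρ

/-- The Reshetnyak energy `E²₊(u, g)`: the (infimum of the) integral `∫ ρ_u² dH²_g` for
the (minimal) weak upper gradient of `u`. -/
noncomputable def energyW (m : MetricSpace M) [MetricSpace X] (u : M → X) : ℝ≥0∞ :=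
  ⨅ (ρ : M → ℝ≥0∞) (_ : IsWeakUpperGradientW m u ρ),
    ∫⁻ z, (ρ z) ^ 2 ∂(@hausdorff2 M m)

/-- `u : M → X` belongs to the Newton–Sobolev space `N^{1,2}(M,X)` (with respect to a
metric `m` on `M`): it is measurable, essentially separably valued, square integrable, and
has a weak upper gradient in `L²`. -/
def IsSobolevW (m : MetricSpace M) [MetricSpace X] (u : M → X) : Prop :=
  (@Measurable M X (@borel M m.toUniformSpace.toTopologicalSpace) (borel X) u) ∧
  (∃ s : Set X, TopologicalSpace.IsSeparable s ∧ ∀ᵐ z ∂(@hausdorff2 M m), u z ∈ s) ∧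
  (∃ x : X, ∫⁻ z, (edist (u z) x) ^ 2 ∂(@hausdorff2 M m) ≠ ⊤) ∧
  (∃ ρ : M → ℝ≥0∞, IsWeakUpperGradientW m u ρ ∧ ∫⁻ z, (ρ z) ^ 2 ∂(@hausdorff2 M m) ≠ ⊤)

end Sobolev

section Trace

variable {M X : Type*} [TopologicalSpace M] [ChartedSpace (EuclideanHalfSpace 2) M]
  [MetricSpace X]

/-- `f` is (a representative of) the trace of the Sobolev map `u : M → X` on the boundary
of the surface `M`: near every boundary point there is a biLipschitz collar
`ψ : (0,1) × [0,1) → M` along which `u` converges to `f` for a.e. parameter `s`. -/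
def IsTraceOfW (m : MetricSpace M) (u f : M → X) : Prop :=
  ∀ z ∈ surfaceBoundary M, ∃ V : Set M, IsOpen V ∧ z ∈ V ∧
    ∃ ψ : ℝ × ℝ → M, ∃ L : ℝ, 1 ≤ L ∧
      (∀ p ∈ Set.Ioo (0:ℝ) 1 ×ˢ Set.Ico (0:ℝ) 1, ∀ q ∈ Set.Ioo (0:ℝ) 1 ×ˢ Set.Ico (0:ℝ) 1,
        dist p q ≤ L * m.dist (ψ p) (ψ q) ∧ m.dist (ψ p) (ψ q) ≤ L * dist p q) ∧
      ψ '' (Set.Ioo (0:ℝ) 1 ×ˢ Set.Ioo (0:ℝ) 1) = V \ surfaceBoundary M ∧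
      ψ '' (Set.Ioo (0:ℝ) 1 ×ˢ {(0:ℝ)}) = V ∩ surfaceBoundary M ∧
      ∀ᵐ s ∂(volume.restrict (Set.Ioo (0:ℝ) 1)),
        Filter.Tendsto (fun t => u (ψ (s, t))) (nhdsWithin 0 (Set.Ioi 0))
          (nhds (f (ψ (s, 0))))

end Trace

/-! ### Polyhedral complexes and triangulations -/

/-- A compact convex polytope in `ℝⁿ`. -/
def IsPolytope {n : ℕ} (C : Set (EuclideanSpace ℝ (Fin n))) : Prop :=
  ∃ s : Finset (EuclideanSpace ℝ (Fin n)), C = convexHull ℝ (s : Set (EuclideanSpace ℝ (Fin n)))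

/-- The dimension of a cell: the dimension of its affine span. -/
noncomputable def cellDim {n : ℕ} (C : Set (EuclideanSpace ℝ (Fin n))) : ℕ :=
  Module.finrank ℝ (vectorSpan ℝ C)

/-- A (finite) polyhedral complex in `ℝⁿ`: a finite collection of compact convex polytopes
(cells), containing each (nonempty, exposed) face of each of its cells, in which the
intersection of two cells is a face of each of them. -/
structure PolyhedralComplex (n : ℕ) where
  cells : Finset (Set (EuclideanSpace ℝ (Fin n)))
  nonempty_cells : ∀ C ∈ cells, C.Nonempty
  polytope : ∀ C ∈ cells, IsPolytope C
  faces_mem : ∀ C ∈ cells, ∀ F : Set (EuclideanSpace ℝ (Fin n)),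
    F.Nonempty → IsExposed ℝ C F → F ∈ cells
  inter_face : ∀ C ∈ cells, ∀ D ∈ cells, (C ∩ D).Nonempty →
    IsExposed ℝ C (C ∩ D) ∧ IsExposed ℝ D (C ∩ D)

namespace PolyhedralComplex

variable {n : ℕ}

/-- The carrier (underlying set) of a polyhedral complex. -/
def carrier (K : PolyhedralComplex n) : Set (EuclideanSpace ℝ (Fin n)) :=
  ⋃₀ (K.cells : Set (Set (EuclideanSpace ℝ (Fin n))))

/-- The `j`-skeleton: the union of all cells of dimension at most `j`. -/
def skeleton (K : PolyhedralComplex n) (j : ℕ) : Set (EuclideanSpace ℝ (Fin n)) :=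
  ⋃₀ {C | C ∈ K.cells ∧ cellDim C ≤ j}

end PolyhedralComplex

/-- A triangulation `h : K → M` of a smooth surface `M`: a homeomorphism from (the carrier
of) a 2-dimensional polyhedral complex onto `M` which is a `C¹`-diffeomorphism onto its
image on every 2-cell. (Since the carrier is compact and `M` is Hausdorff, a continuous
bijection is automatically a homeomorphism.) -/
structure Triangulation (M : Type*) [TopologicalSpace M]
    [ChartedSpace (EuclideanHalfSpace 2) M] where
  n : ℕ
  K : PolyhedralComplex n
  dim_le : ∀ C ∈ K.cells, cellDim C ≤ 2
  toFun : EuclideanSpace ℝ (Fin n) → M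
  contOn : ContinuousOn toFun K.carrier
  bij : Set.BijOn toFun K.carrier Set.univ
  smooth_on_two_cells : ∀ C ∈ K.cells, cellDim C = 2 →
    ContMDiffOn (𝓘(ℝ, EuclideanSpace ℝ (Fin n))) (𝓡∂ 2) 1 toFun C ∧
    ∀ x ∈ C, Function.Injective
      (⇑(mfderivWithin (𝓘(ℝ, EuclideanSpace ℝ (Fin n))) (𝓡∂ 2) toFun C x))

namespace Triangulation

variable {M : Type*} [TopologicalSpace M] [ChartedSpace (EuclideanHalfSpace 2) M]

/-- The subcomplex `∂K`, preimage of the boundary of `M`. -/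
def bdryK (T : Triangulation M) : Set (EuclideanSpace ℝ (Fin T.n)) :=
  T.toFun ⁻¹' surfaceBoundary M ∩ T.K.carrier

/-- The `j`-skeleton of the triangulation. -/
def skel (T : Triangulation M) (j : ℕ) : Set (EuclideanSpace ℝ (Fin T.n)) :=
  T.K.skeleton j

/-- The modified 1-skeleton `K̂¹ = (K¹ \ ∂K) ∪ K⁰`. -/
def skelHat (T : Triangulation M) : Set (EuclideanSpace ℝ (Fin T.n)) :=
  (T.skel 1 \ T.bdryK) ∪ T.skel 0

end Triangulation

/-! ### Homotopies -/

/-- `f` and `g` are homotopic on `S` relative to `A ⊆ S` (the homotopy is constant in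
time on `A`). -/
def HomotopicRelOn {Z Y : Type*} [TopologicalSpace Z] [TopologicalSpace Y]
    (f g : Z → Y) (S A : Set Z) : Prop :=
  ∃ H : Z × ℝ → Y, ContinuousOn H (S ×ˢ Set.Icc (0:ℝ) 1) ∧
    (∀ z ∈ S, H (z, 0) = f z ∧ H (z, 1) = g z) ∧
    (∀ z ∈ A, ∀ t ∈ Set.Icc (0:ℝ) 1, H (z, t) = f z)

/-- `f` and `g` (defined on the 1-skeleton `S`, with `A = ∂K`) are homotopic relative to a
boundary `B ⊆ Y`: there is a homotopy between them whose restriction to `A` is a weakly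
monotone parametrization of `B` at each time. -/
def HomotopicRelBdryIn {Z Y : Type*} [TopologicalSpace Z] [MetricSpace Y]
    (f g : Z → Y) (S A : Set Z) (B : Set Y) : Prop :=
  ∃ H : Z × ℝ → Y, ContinuousOn H (S ×ˢ Set.Icc (0:ℝ) 1) ∧
    (∀ z ∈ S, H (z, 0) = f z ∧ H (z, 1) = g z) ∧
    ∀ t ∈ Set.Icc (0:ℝ) 1, WeaklyMonotoneParam B (fun z : A => H (z.1, t))

section OneHomotopy

variable {M X : Type*} [TopologicalSpace M] [ChartedSpace (EuclideanHalfSpace 2) M]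
  [MetricSpace X]

/-- The (Sobolev) map `u : M → X` is 1-homotopic to the continuous map `φ` relative to the
boundary `B = ∂X`: for some triangulation of `M`, a continuous representative of the
restriction of `u` to the 1-skeleton (defined `H¹`-a.e. on the interior edges and by the
trace of `u` on `∂K`) is homotopic to the restriction of `φ` relative to `∂X`. -/
def OneHomotopicRelW (m : MetricSpace M) (u φ : M → X) (B : Set X) : Prop :=
  ∃ T : Triangulation M, ∃ ϱ : EuclideanSpace ℝ (Fin T.n) → X,
    ContinuousOn ϱ (T.skel 1) ∧
    (∀ᵐ z ∂((hausdorff1 (EuclideanSpace ℝ (Fin T.n))).restrict (T.skel 1 \ T.bdryK)),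
      ϱ z = u (T.toFun z)) ∧
    (∃ f : M → X, IsTraceOfW m u f ∧ ∀ z ∈ T.bdryK, ϱ z = f (T.toFun z)) ∧
    HomotopicRelBdryIn ϱ (φ ∘ T.toFun) (T.skel 1) (T.bdryK) B

/-- The family `Λ(M, φ, X)` of Sobolev maps `u ∈ N^{1,2}(M,X)` whose trace has a continuous
representative which is a weakly monotone parametrization of `∂X = φ(∂M)`, and which are
1-homotopic to `φ` relative to `∂X`. -/
def LambdaSet (φ : M → X) : Set (M → X) :=
  {u | ∃ g : RiemannianMetric M,
    IsSobolevW g.toMetricSpace u ∧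
    (∃ f : M → X, IsTraceOfW g.toMetricSpace u f ∧
      WeaklyMonotoneParam (φ '' surfaceBoundary M)
        (fun z : (surfaceBoundary M) => f z.1)) ∧
    OneHomotopicRelW g.toMetricSpace u φ (φ '' surfaceBoundary M)}

end OneHomotopy

/-! ### Injective metric spaces and injective hulls -/

/-- A metric space `E` is injective: every 1-Lipschitz map into `E` defined on a subset of
a metric space extends 1-Lipschitzly to the whole space. -/
def IsInjectiveMetricSpace (E : Type*) [MetricSpace E] : Prop :=
  ∀ (Z : Type) (_ : MetricSpace Z) (A : Set Z) (f : A → E), LipschitzWith 1 f →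
    ∃ F : Z → E, LipschitzWith 1 F ∧ ∀ a : A, F a = f a

/-- `ι : X → E` realizes `E` as an injective hull of `X`: an isometric embedding into an
injective metric space that is minimal, in the sense that no proper (injective) subspace
of `E` containing `ι(X)` is injective. -/
def IsInjectiveHull {X E : Type*} [MetricSpace X] [MetricSpace E] (ι : X → E) : Prop :=
  Isometry ι ∧ IsInjectiveMetricSpace E ∧
    ∀ E' : Set E, Set.range ι ⊆ E' → IsInjectiveMetricSpace E' → E' = Set.univ

/-- The open `r`-neighborhood of the image of `ι : X → E` (e.g. of `X` inside its
injective hull). -/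
def nbhdOfImage {X E : Type*} [MetricSpace E] (ι : X → E) (r : ℝ) : Set E :=
  {e : E | ∃ x : X, dist e (ι x) < r}

/-- `Y` is an `ε`-thickening of `X` via the isometric embedding `j : X → Y`. -/
def IsThickening {X Y : Type*} [MetricSpace X] [MetricSpace Y] (ε : ℝ≥0∞) (j : X → Y) :
    Prop :=
  Isometry j ∧ EMetric.hausdorffEdist (Set.range j) (Set.univ : Set Y) < ε

/-! ### Parametrized (Hausdorff) area -/

/-- Coercion `ℕ∞ → ℝ≥0∞`. -/
def enatToENNReal : ℕ∞ → ℝ≥0∞ := WithTop.map (fun k : ℕ => (k : ℝ≥0))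

/-- The parametrized (Hausdorff) area of `v` on the set `S`. By the area formula, for
Lipschitz (and Sobolev) maps the integral of the jacobian of the approximate metric
derivative equals the integral over the target of the multiplicity function. -/
noncomputable def parametrizedArea {Z Y : Type*} [MetricSpace Y] (v : Z → Y) (S : Set Z) :
    ℝ≥0∞ :=
  ∫⁻ y, enatToENNReal ((v ⁻¹' {y} ∩ S).encard) ∂(hausdorff2 Y)

/-! ### Cell-like sets and maps -/

/-- The Hilbert cube. -/
def HilbertCube : Type := ℕ → (Set.Icc (0:ℝ) 1)

instance : TopologicalSpace HilbertCube := by unfold HilbertCube; infer_instance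

/-- A compact set is cell-like if it admits a topological embedding into the Hilbert cube
whose image is null-homotopic in every neighborhood of itself. -/
def IsCellLikeSet {Y : Type*} [TopologicalSpace Y] (K : Set Y) : Prop :=
  IsCompact K ∧ ∃ e : K → HilbertCube, Continuous e ∧ Function.Injective e ∧
    ∀ U : Set HilbertCube, IsOpen U → Set.range e ⊆ U →
      ∃ (H : K × ℝ → HilbertCube) (c : HilbertCube), Continuous H ∧
        (∀ k : K, H (k, 0) = e k ∧ H (k, 1) = c) ∧
        (∀ (k : K) (t : ℝ), t ∈ Set.Icc (0:ℝ) 1 → H (k, t) ∈ U)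

/-- A continuous surjection is cell-like if all its fibers are cell-like sets. -/
def IsCellLikeMap {M X : Type*} [TopologicalSpace M] [TopologicalSpace X] (v : M → X) :
    Prop :=
  Continuous v ∧ Function.Surjective v ∧ ∀ x : X, IsCellLikeSet (v ⁻¹' {x})

/-! ### Jordan curves and domains -/

/-- A Jordan curve in `X`: a subset homeomorphic to the circle `S¹`. -/
def IsJordanCurve {X : Type*} [TopologicalSpace X] (S : Set X) : Prop :=
  Nonempty (S ≃ₜ (Metric.sphere (0 : EuclideanSpace ℝ (Fin 2)) 1))

/-- A Jordan domain in `X`: an open subset homeomorphic to the open unit disc whose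
topological boundary is a Jordan curve. -/
def IsJordanDomain {X : Type*} [TopologicalSpace X] (Ω : Set X) : Prop :=
  IsOpen Ω ∧ Nonempty (Ω ≃ₜ (Metric.ball (0 : EuclideanSpace ℝ (Fin 2)) 1)) ∧
  IsJordanCurve (frontier Ω)

/-! ### Quasiconformality and quasisymmetry -/

/-- A map between metric surfaces is geometrically `K`-quasiconformal (on all of `Z`) if
it quasi-preserves the modulus of every curve family. -/
def IsGeomQCWith {Z X : Type*} [MetricSpace Z] [MetricSpace X] (K : ℝ≥0∞) (u : Z → X) :
    Prop :=
  ∀ Γ : Set (Curve Z),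
    modulus Γ ≤ K * modulus (Curve.comp u '' Γ) ∧
    modulus (Curve.comp u '' Γ) ≤ K * modulus Γ

/-- A homeomorphism `f` between metric spaces is quasisymmetric: there is a homeomorphism
`η : [0,∞) → [0,∞)` such that `d(f x, f y) ≤ η(t) · d(f x, f z)` whenever
`d(x,y) ≤ t · d(x,z)`. -/
def IsQuasisymmetryW {Z X : Type*} (dZ : Z → Z → ℝ) (dX : X → X → ℝ) (f : Z → X) : Prop :=
  ∃ η : ℝ → ℝ, ContinuousOn η (Set.Ici 0) ∧ StrictMonoOn η (Set.Ici 0) ∧ η 0 = 0 ∧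
    η '' Set.Ici 0 = Set.Ici 0 ∧
    ∀ (x y z : Z) (t : ℝ), 0 ≤ t → dZ x y ≤ t * dZ x z → dX (f x) (f y) ≤ η t * dX (f x) (f z)

/-! ### Essential oscillation -/

/-- The essential oscillation of `u` on the `δ`-ball around `z` (with respect to the
metric `m` on the domain): the infimum of the diameters of images of full-measure subsets
of the ball. -/
noncomputable def essOscW {M X : Type*} [MetricSpace X] (m : MetricSpace M) (u : M → X)
    (z : M) (δ : ℝ) : ℝ≥0∞ :=
  ⨅ (A : Set M) (_ : A ⊆ {p | m.dist p z < δ})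
    (_ : (@hausdorff2 M m) ({p | m.dist p z < δ} \ A) = 0),
    EMetric.diam (u '' A)

/-! ### Conformal diffeomorphisms -/

/-- `ψ` is a conformal diffeomorphism from `(M, g)` to `(M, h)`: a smooth diffeomorphism
whose derivative pulls `h` back to a (pointwise positive) multiple of `g`. -/
def IsConformalDiffeo {M : Type*} [TopologicalSpace M]
    [ChartedSpace (EuclideanHalfSpace 2) M] (g h : RiemannianMetric M) (ψ : M → M) :
    Prop :=
  Function.Bijective ψ ∧ ContMDiff (𝓡∂ 2) (𝓡∂ 2) (⊤ : ℕ∞) ψ ∧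
  (∃ ψinv : M → M, Function.LeftInverse ψinv ψ ∧ ContMDiff (𝓡∂ 2) (𝓡∂ 2) (⊤ : ℕ∞) ψinv) ∧
  ∃ lam : M → ℝ, (∀ x, 0 < lam x) ∧ ∀ (x : M) (w₁ w₂ : EuclideanSpace ℝ (Fin 2)),
    h.innerCLM (ψ x) (mfderiv (𝓡∂ 2) (𝓡∂ 2) ψ x w₁) (mfderiv (𝓡∂ 2) (𝓡∂ 2) ψ x w₂)
      = lam x * g.innerCLM x w₁ w₂

/-- The family `Λ(M, X)` of Sobolev maps `u ∈ N^{1,2}(M, X)` that are uniform limits of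
homeomorphisms from `M` to `X`. -/
def LambdaHomeoSet (M : Type*) [TopologicalSpace M]
    [ChartedSpace (EuclideanHalfSpace 2) M] (X : Type*) [MetricSpace X] :
    Set (M → X) :=
  {u | (∃ g : RiemannianMetric M, IsSobolevW g.toMetricSpace u) ∧
    ∃ F : ℕ → M ≃ₜ X, TendstoUniformly (fun n => ⇑(F n)) u Filter.atTop}


/-! ### Auxiliary theory: absolute neighborhood extensors (for Lemma 2.2) -/

section ANE

open Topology

/-- Absolute neighborhood extensor property "into `P`". -/
def ANEIn {S : Type*} [TopologicalSpace S] (P : Set S) : Prop :=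
  ∀ (Z : Type) (_ : MetricSpace Z) (A : Set Z), IsClosed A → ∀ f : Z → S,
    ContinuousOn f A → f '' A ⊆ P →
    ∃ (U : Set Z) (g : Z → S), IsOpen U ∧ A ⊆ U ∧ ContinuousOn g U ∧
      Set.EqOn g f A ∧ g '' U ⊆ P

/-- Pasting lemma: continuity on a set covered by two closed pieces. -/
theorem continuousOn_of_union_closed {Z S : Type*} [TopologicalSpace Z] [TopologicalSpace S]
    {g : Z → S} {D C₁ C₂ : Set Z} (h₁ : IsClosed C₁) (h₂ : IsClosed C₂)
    (hcov : D ⊆ C₁ ∪ C₂) (hg₁ : ContinuousOn g (D ∩ C₁)) (hg₂ : ContinuousOn g (D ∩ C₂)) :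
    ContinuousOn g D := by
  have key : ∀ z ∈ D, z ∈ C₁ → z ∈ C₂ → ContinuousWithinAt g D z := by
    intro z hz hz1 hz2
    have w₁ : ContinuousWithinAt g (D ∩ C₁) z := hg₁ z ⟨hz, hz1⟩
    have w₂ : ContinuousWithinAt g (D ∩ C₂) z := hg₂ z ⟨hz, hz2⟩
    refine (w₁.union w₂).mono fun w hw => ?_
    rcases hcov hw with h | h
    · exact Or.inl ⟨hw, h⟩
    · exact Or.inr ⟨hw, h⟩
  have key1 : ∀ z ∈ D, z ∈ C₁ → z ∉ C₂ → ContinuousWithinAt g D z := by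
    intro z hz hz1 hz2
    have w₁ : ContinuousWithinAt g (D ∩ C₁) z := hg₁ z ⟨hz, hz1⟩
    have hmem : C₂ᶜ ∈ 𝓝 z := h₂.isOpen_compl.mem_nhds hz2
    refine (continuousWithinAt_inter hmem).mp ?_
    refine w₁.mono fun w hw => ⟨hw.1, ?_⟩
    rcases hcov hw.1 with h | h
    · exact h
    · exact absurd h hw.2
  have key2 : ∀ z ∈ D, z ∈ C₂ → z ∉ C₁ → ContinuousWithinAt g D z := by
    intro z hz hz2 hz1
    have w₂ : ContinuousWithinAt g (D ∩ C₂) z := hg₂ z ⟨hz, hz2⟩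
    have hmem : C₁ᶜ ∈ 𝓝 z := h₁.isOpen_compl.mem_nhds hz1
    refine (continuousWithinAt_inter hmem).mp ?_
    refine w₂.mono fun w hw => ⟨hw.1, ?_⟩
    rcases hcov hw.1 with h | h
    · exact absurd h hw.2
    · exact h
  intro z hz
  rcases hcov hz with h1 | h2
  · by_cases h2 : z ∈ C₂
    · exact key z hz h1 h2
    · exact key1 z hz h1 h2
  · by_cases h1 : z ∈ C₁
    · exact key z hz h1 h2
    · exact key2 z hz h2 h1

/-- Descend continuity through a subtype inclusion: if `g : ↥C → S` is continuous on `U`,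
then the induced total map on `Z` is continuous on `val '' U`. -/
theorem continuousOn_image_val {Z S : Type*} [TopologicalSpace Z] [TopologicalSpace S]
    {C : Set Z} {g : ↥C → S} {U : Set ↥C} (hg : ContinuousOn g U) (g' : Z → S)
    (hgg' : ∀ x : ↥C, g' x = g x) :
    ContinuousOn g' (Subtype.val '' U) := by
  rintro _ ⟨x, hx, rfl⟩
  have hemb : IsEmbedding (Subtype.val : ↥C → Z) := IsEmbedding.subtypeVal
  unfold ContinuousWithinAt
  rw [← hemb.map_nhdsWithin_eq U x]
  rw [Filter.tendsto_map'_iff]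
  have : (g' ∘ Subtype.val) = g := funext hgg'
  rw [this, hgg' x]
  exact hg x hx


abbrev E2 := EuclideanSpace ℝ (Fin 2)
abbrev H2 := EuclideanHalfSpace 2

instance : TietzeExtension E2 :=
  TietzeExtension.of_homeo (EuclideanSpace.equiv (Fin 2) ℝ).toHomeomorph

/-- The clamping retraction of the plane onto the (closed) half-plane. -/
def clamp : E2 → E2 := fun x => WithLp.toLp 2 (Function.update x.ofLp 0 (max (x 0) 0))

theorem clamp_cont : Continuous clamp := by
  have h : Continuous fun v : Fin 2 → ℝ => Function.update v 0 (max (v 0) 0) := by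
    refine continuous_pi fun i => ?_
    simp only [Function.update_apply]
    split_ifs
    · exact (continuous_apply 0).max continuous_const
    · exact continuous_apply i
  let Φ := (EuclideanSpace.equiv (Fin 2) ℝ).toHomeomorph
  have : clamp = Φ.symm ∘ (fun v : Fin 2 → ℝ => Function.update v 0 (max (v 0) 0)) ∘ Φ := rfl
  rw [this]
  exact Φ.symm.continuous.comp (h.comp Φ.continuous)

theorem clamp_nonneg (x : E2) : 0 ≤ clamp x 0 := by
  simp [clamp]

theorem clamp_eq (x : E2) (hx : 0 ≤ x 0) : clamp x = x := by
  ext i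
  simp only [clamp, PiLp.toLp_apply, Function.update_apply]
  split_ifs with h
  · subst h; exact max_eq_left hx
  · rfl

theorem chart_ANEIn {M : Type*} [TopologicalSpace M] (φ : OpenPartialHomeomorph M H2)
    {P : Set M} (hP : IsOpen P) (hPs : P ⊆ φ.source) : ANEIn P := by
  intro Z _inst A hA f hf hfP
  have hfPm : ∀ a ∈ A, f a ∈ P := fun a ha => hfP ⟨a, ha, rfl⟩
  have hT' : IsOpen (φ '' P) := by
    have := φ.isOpen_image_source_inter hP; rwa [inter_eq_right.mpr hPs] at this
  have hT's : φ '' P ⊆ φ.target := by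
    rintro _ ⟨p, hp, rfl⟩; exact φ.map_source (hPs hp)
  set fe : Z → E2 := fun z => (φ (f z)).1 with hfe_def
  have hfe : ContinuousOn fe A := by
    have : ContinuousOn (fun z => φ (f z)) A :=
      φ.continuousOn.comp hf fun a ha => hPs (hfPm a ha)
    exact continuous_subtype_val.comp_continuousOn this
  obtain ⟨F, hF⟩ := ContinuousMap.exists_restrict_eq (Y := E2) hA ⟨A.restrict fe, hfe.restrict⟩
  have hFa : ∀ a ∈ A, F a = fe a := fun a ha => DFunLike.congr_fun hF ⟨a, ha⟩
  set h : Z → E2 := fun z => clamp (F z) with hh_def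
  have hhc : Continuous h := clamp_cont.comp F.continuous
  set hH : Z → H2 := fun z => ⟨h z, clamp_nonneg _⟩ with hH_def
  have hHc : Continuous hH := hhc.subtype_mk _
  have hHa : ∀ a ∈ A, hH a = φ (f a) := by
    intro a ha
    apply Subtype.ext
    show clamp (F a) = _
    rw [hFa a ha]
    exact clamp_eq _ (φ (f a)).2
  refine ⟨hH ⁻¹' (φ '' P), fun z => φ.symm (hH z), hT'.preimage hHc, ?_, ?_, ?_, ?_⟩
  · intro a ha
    show hH a ∈ φ '' P
    rw [hHa a ha]
    exact ⟨f a, hfPm a ha, rfl⟩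
  · exact φ.symm.continuousOn.comp hHc.continuousOn fun z hz => hT's hz
  · intro a ha
    show φ.symm (hH a) = f a
    rw [hHa a ha]
    exact φ.left_inv (hPs (hfPm a ha))
  · rintro _ ⟨z, hz, rfl⟩
    obtain ⟨p, hp, hpe⟩ := hz
    show φ.symm (hH z) ∈ P
    rw [← hpe, φ.left_inv (hPs hp)]
    exact hp


theorem ANEIn.union {S : Type*} [TopologicalSpace S] {P Q : Set S}
    (hPo : IsOpen P) (hQo : IsOpen Q) (hP : ANEIn P) (hQ : ANEIn Q)
    (hPQ : ANEIn (P ∩ Q)) : ANEIn (P ∪ Q) := by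
  intro Z mZ A hA f hf hfPQ
  have hfPQm : ∀ a ∈ A, f a ∈ P ∪ Q := fun a ha => hfPQ ⟨a, ha, rfl⟩
  -- the two "pure" parts of A and a Urysohn function separating them
  set AP : Set Z := A ∩ f ⁻¹' Qᶜ with hAP_def
  set AQ : Set Z := A ∩ f ⁻¹' Pᶜ with hAQ_def
  have hAPc : IsClosed AP := hf.preimage_isClosed_of_isClosed hA hQo.isClosed_compl
  have hAQc : IsClosed AQ := hf.preimage_isClosed_of_isClosed hA hPo.isClosed_compl
  have hdisj : Disjoint AP AQ := by
    rw [Set.disjoint_left]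
    rintro z ⟨hzA, hzQ⟩ ⟨_, hzP⟩
    rcases hfPQm z hzA with h | h
    · exact hzP h
    · exact hzQ h
  obtain ⟨u, hu0, hu1, hu01⟩ := exists_continuous_zero_one_of_isClosed hAPc hAQc hdisj
  set Z1 : Set Z := {z | u z ≤ 1/2} with hZ1_def
  set Z2 : Set Z := {z | 1/2 ≤ u z} with hZ2_def
  set Z0 : Set Z := {z | u z = 1/2} with hZ0_def
  have hZ1c : IsClosed Z1 := isClosed_le u.continuous continuous_const
  have hZ2c : IsClosed Z2 := isClosed_le continuous_const u.continuous
  have hZ0c : IsClosed Z0 := isClosed_eq u.continuous continuous_const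
  have hZ01 : Z0 ⊆ Z1 := fun z hz => le_of_eq hz
  have hZ02 : Z0 ⊆ Z2 := fun z hz => ge_of_eq hz
  have hfz1 : ∀ a ∈ A ∩ Z1, f a ∈ P := by
    rintro a ⟨haA, haZ⟩
    by_contra hfa
    have : a ∈ AQ := ⟨haA, hfa⟩
    have h1 : u a = 1 := hu1 this
    have h2 : u a ≤ 1/2 := haZ
    rw [h1] at h2
    norm_num at h2
  have hfz2 : ∀ a ∈ A ∩ Z2, f a ∈ Q := by
    rintro a ⟨haA, haZ⟩
    by_contra hfa
    have : a ∈ AP := ⟨haA, hfa⟩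
    have h1 : u a = 0 := hu0 this
    have h2 : 1/2 ≤ u a := haZ
    rw [h1] at h2
    norm_num at h2
  have hfz0 : ∀ a ∈ A ∩ Z0, f a ∈ P ∩ Q :=
    fun a ha => ⟨hfz1 a ⟨ha.1, hZ01 ha.2⟩, hfz2 a ⟨ha.1, hZ02 ha.2⟩⟩
  -- Step 0: extend f over a relative neighborhood of A ∩ Z0 inside Z0, into P ∩ Q
  obtain ⟨U0, g0, hU0o, hU0s, hg0c, hg0e, hg0P⟩ :=
    hPQ ↥Z0 inferInstance (Subtype.val ⁻¹' A) (hA.preimage continuous_subtype_val)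
      (f ∘ Subtype.val)
      (hf.comp continuous_subtype_val.continuousOn (fun x hx => hx))
      (by rintro _ ⟨⟨z, hz0⟩, hz, rfl⟩; exact hfz0 z ⟨hz, hz0⟩)
  obtain ⟨G0', hG0'o, hG0'e⟩ := isOpen_induced_iff.mp hU0o
  have hvalU0 : Subtype.val '' U0 = Z0 ∩ G0' := by
    rw [← hG0'e, Subtype.image_preimage_coe]
  -- shrink: W with A ∩ Z0 ⊆ W, closure W ⊆ val '' U0
  have hAZ0G : A ∩ Z0 ⊆ G0' := by
    intro z hz
    have : (⟨z, hz.2⟩ : ↥Z0) ∈ U0 := hU0s hz.1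
    rw [← hG0'e] at this
    exact this
  obtain ⟨V, hVo, hAV, hclV⟩ :=
    normal_exists_closure_subset (hA.inter hZ0c) hG0'o hAZ0G
  set W : Set Z := Z0 ∩ V with hW_def
  have hclW : closure W ⊆ Subtype.val '' U0 := by
    rw [hvalU0]
    intro z hz
    have h1 : z ∈ closure Z0 := closure_mono inter_subset_left hz
    have h2 : z ∈ closure V := closure_mono inter_subset_right hz
    exact ⟨hZ0c.closure_subset h1, hclV h2⟩
  have hclWZ0 : closure W ⊆ Z0 := fun z hz =>
    hZ0c.closure_subset (closure_mono inter_subset_left hz)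
  -- the total extension over (a neighborhood in) Z0
  set g0' : Z → S := fun z => if h : z ∈ Z0 then g0 ⟨z, h⟩ else f z with hg0'_def
  have hg0'c : ContinuousOn g0' (Subtype.val '' U0) :=
    continuousOn_image_val hg0c g0' (fun x => by simp [hg0'_def, x.2])
  have hg0'A : Set.EqOn g0' f A := by
    intro z hz
    by_cases h : z ∈ Z0
    · have : (⟨z, h⟩ : ↥Z0) ∈ Subtype.val ⁻¹' A := hz
      simp only [hg0'_def, dif_pos h]
      exact hg0e this
    · simp [hg0'_def, h]
  have hg0'P : ∀ z ∈ Subtype.val '' U0, g0' z ∈ P ∩ Q := by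
    rintro _ ⟨⟨z, hz0⟩, hz, rfl⟩
    have : g0 ⟨z, hz0⟩ ∈ P ∩ Q := hg0P ⟨⟨z, hz0⟩, hz, rfl⟩
    simpa [hg0'_def, hz0] using this

  -- Side 1: extend over a relative neighborhood inside Z1, into P
  set A1 : Set Z := (A ∩ Z1) ∪ closure W with hA1_def
  have hA1c : IsClosed A1 := ((hA.inter hZ1c).union isClosed_closure)
  have hA1Z1 : A1 ⊆ Z1 := by
    rintro z (hz | hz)
    · exact hz.2
    · exact hZ01 (hclWZ0 hz)
  have hg0'cA1 : ContinuousOn g0' A1 := by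
    refine continuousOn_of_union_closed (C₁ := closure W) (C₂ := A) isClosed_closure hA ?_ ?_ ?_
    · rintro z (hz | hz)
      · exact Or.inr hz.1
      · exact Or.inl hz
    · exact hg0'c.mono (fun z hz => hclW hz.2)
    · exact (hf.mono inter_subset_right).congr (fun z hz => hg0'A hz.2)
  have hg0'A1P : g0' '' A1 ⊆ P := by
    rintro _ ⟨z, hz, rfl⟩
    rcases hz with hz | hz
    · rw [hg0'A hz.1]
      exact hfz1 z hz
    · exact (hg0'P z (hclW hz)).1
  obtain ⟨U1, g1, hU1o, hU1s, hg1c, hg1e, hg1P⟩ :=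
    hP ↥Z1 inferInstance (Subtype.val ⁻¹' A1) (hA1c.preimage continuous_subtype_val)
      (g0' ∘ Subtype.val)
      (hg0'cA1.comp continuous_subtype_val.continuousOn (fun x hx => hx))
      (by rintro _ ⟨⟨z, hz1⟩, hz, rfl⟩; exact hg0'A1P ⟨z, hz, rfl⟩)
  obtain ⟨G1, hG1o, hG1e⟩ := isOpen_induced_iff.mp hU1o
  have hvalU1 : Subtype.val '' U1 = Z1 ∩ G1 := by
    rw [← hG1e, Subtype.image_preimage_coe]
  set g1' : Z → S := fun z => if h : z ∈ Z1 then g1 ⟨z, h⟩ else f z with hg1'_def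
  have hg1'c : ContinuousOn g1' (Subtype.val '' U1) :=
    continuousOn_image_val hg1c g1' (fun x => by simp [hg1'_def, x.2])
  have hg1'A1 : ∀ z ∈ A1, g1' z = g0' z := by
    intro z hz
    have hz1 : z ∈ Z1 := hA1Z1 hz
    have : (⟨z, hz1⟩ : ↥Z1) ∈ Subtype.val ⁻¹' A1 := hz
    simp only [hg1'_def, dif_pos hz1]
    exact hg1e this
  have hA1G1 : A1 ⊆ Z1 ∩ G1 := by
    intro z hz
    have : (⟨z, hA1Z1 hz⟩ : ↥Z1) ∈ U1 := hU1s hz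
    rw [← hG1e] at this
    exact ⟨hA1Z1 hz, this⟩
  have hg1'P : ∀ z ∈ Subtype.val '' U1, g1' z ∈ P := by
    rintro _ ⟨⟨z, hz1⟩, hz, rfl⟩
    have : g1 ⟨z, hz1⟩ ∈ P := hg1P ⟨⟨z, hz1⟩, hz, rfl⟩
    simpa [hg1'_def, hz1] using this

  -- Side 2: extend over a relative neighborhood inside Z2, into Q
  set A2 : Set Z := (A ∩ Z2) ∪ closure W with hA2_def
  have hA2c : IsClosed A2 := ((hA.inter hZ2c).union isClosed_closure)
  have hA2Z2 : A2 ⊆ Z2 := by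
    rintro z (hz | hz)
    · exact hz.2
    · exact hZ02 (hclWZ0 hz)
  have hg0'cA2 : ContinuousOn g0' A2 := by
    refine continuousOn_of_union_closed (C₁ := closure W) (C₂ := A) isClosed_closure hA ?_ ?_ ?_
    · rintro z (hz | hz)
      · exact Or.inr hz.1
      · exact Or.inl hz
    · exact hg0'c.mono (fun z hz => hclW hz.2)
    · exact (hf.mono inter_subset_right).congr (fun z hz => hg0'A hz.2)
  have hg0'A2P : g0' '' A2 ⊆ Q := by
    rintro _ ⟨z, hz, rfl⟩
    rcases hz with hz | hz
    · rw [hg0'A hz.1]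
      exact hfz2 z hz
    · exact (hg0'P z (hclW hz)).2
  obtain ⟨U2, g2, hU2o, hU2s, hg2c, hg2e, hg2P⟩ :=
    hQ ↥Z2 inferInstance (Subtype.val ⁻¹' A2) (hA2c.preimage continuous_subtype_val)
      (g0' ∘ Subtype.val)
      (hg0'cA2.comp continuous_subtype_val.continuousOn (fun x hx => hx))
      (by rintro _ ⟨⟨z, hz1⟩, hz, rfl⟩; exact hg0'A2P ⟨z, hz, rfl⟩)
  obtain ⟨G2, hG2o, hG2e⟩ := isOpen_induced_iff.mp hU2o
  have hvalU2 : Subtype.val '' U2 = Z2 ∩ G2 := by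
    rw [← hG2e, Subtype.image_preimage_coe]
  set g2' : Z → S := fun z => if h : z ∈ Z2 then g2 ⟨z, h⟩ else f z with hg2'_def
  have hg2'c : ContinuousOn g2' (Subtype.val '' U2) :=
    continuousOn_image_val hg2c g2' (fun x => by simp [hg2'_def, x.2])
  have hg2'A2 : ∀ z ∈ A2, g2' z = g0' z := by
    intro z hz
    have hz1 : z ∈ Z2 := hA2Z2 hz
    have : (⟨z, hz1⟩ : ↥Z2) ∈ Subtype.val ⁻¹' A2 := hz
    simp only [hg2'_def, dif_pos hz1]
    exact hg2e this
  have hA2G2 : A2 ⊆ Z2 ∩ G2 := by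
    intro z hz
    have : (⟨z, hA2Z2 hz⟩ : ↥Z2) ∈ U2 := hU2s hz
    rw [← hG2e] at this
    exact ⟨hA2Z2 hz, this⟩
  have hg2'P : ∀ z ∈ Subtype.val '' U2, g2' z ∈ Q := by
    rintro _ ⟨⟨z, hz1⟩, hz, rfl⟩
    have : g2 ⟨z, hz1⟩ ∈ Q := hg2P ⟨⟨z, hz1⟩, hz, rfl⟩
    simpa [hg2'_def, hz1] using this

  -- Final gluing
  set U : Set Z := ({z | u z < 1/2} ∩ G1) ∪ ({z | 1/2 < u z} ∩ G2) ∪ (V ∩ G1 ∩ G2) with hU_def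
  have hUo : IsOpen U := by
    have h1 : IsOpen {z | u z < 1/2} := isOpen_lt u.continuous continuous_const
    have h2 : IsOpen {z | 1/2 < u z} := isOpen_lt continuous_const u.continuous
    exact ((h1.inter hG1o).union (h2.inter hG2o)).union ((hVo.inter hG1o).inter hG2o)
  set g : Z → S := fun z => if u z ≤ 1/2 then g1' z else g2' z with hg_def
  have hsub1 : U ∩ Z1 ⊆ Z1 ∩ G1 := by
    rintro z ⟨hzU, hz1⟩
    refine ⟨hz1, ?_⟩
    rcases hzU with (⟨_, h⟩ | ⟨h, _⟩) | ⟨⟨_, h⟩, _⟩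
    · exact h
    · have h' : (1:ℝ)/2 < u z := h
      have h1 : u z ≤ 1/2 := hz1
      linarith
    · exact h
  have hsub2 : U ∩ Z2 ⊆ Z2 ∩ G2 := by
    rintro z ⟨hzU, hz2⟩
    refine ⟨hz2, ?_⟩
    rcases hzU with (⟨h, _⟩ | ⟨_, h⟩) | ⟨_, h⟩
    · have h' : u z < 1/2 := h
      have h2 : 1/2 ≤ u z := hz2
      linarith
    · exact h
    · exact h
  have hmid : ∀ z ∈ U, u z = 1/2 → g1' z = g0' z ∧ g2' z = g0' z := by
    intro z hzU hz0
    have hzW : z ∈ W := by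
      rcases hzU with (⟨h, _⟩ | ⟨h, _⟩) | ⟨⟨hV', _⟩, _⟩
      · have h' : u z < 1/2 := h
        rw [hz0] at h'
        norm_num at h'
      · have h' : (1:ℝ)/2 < u z := h
        rw [hz0] at h'
        norm_num at h'
      · exact ⟨hz0, hV'⟩
    have hzcl : z ∈ closure W := subset_closure hzW
    exact ⟨hg1'A1 z (Or.inr hzcl), hg2'A2 z (Or.inr hzcl)⟩
  have hcov : U ⊆ Z1 ∪ Z2 := fun z _ => le_total (u z) (1/2) |>.imp (fun h => h) (fun h => h)
  refine ⟨U, g, hUo, ?_, ?_, ?_, ?_⟩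
  · -- A ⊆ U
    intro a ha
    rcases lt_trichotomy (u a) (1/2) with h | h | h
    · exact Or.inl (Or.inl ⟨h, (hA1G1 (Or.inl ⟨ha, le_of_lt h⟩)).2⟩)
    · have haZ0 : a ∈ A ∩ Z0 := ⟨ha, h⟩
      have haW : a ∈ V := hAV haZ0
      have h1 : a ∈ G1 := (hA1G1 (Or.inr (subset_closure ⟨h, haW⟩))).2
      have h2 : a ∈ G2 := (hA2G2 (Or.inr (subset_closure ⟨h, haW⟩))).2
      exact Or.inr ⟨⟨haW, h1⟩, h2⟩
    · exact Or.inl (Or.inr ⟨h, (hA2G2 (Or.inl ⟨ha, le_of_lt h⟩)).2⟩)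
  · -- continuity
    refine continuousOn_of_union_closed hZ1c hZ2c hcov ?_ ?_
    · refine (hg1'c.mono ?_).congr ?_
      · rw [hvalU1]; exact hsub1
      · intro z hz
        have h : u z ≤ 1/2 := hz.2
        exact if_pos h
    · refine (hg2'c.mono ?_).congr ?_
      · rw [hvalU2]; exact hsub2
      · intro z hz
        by_cases h : u z ≤ 1/2
        · have he : u z = 1/2 := le_antisymm h hz.2
          have hm := hmid z hz.1 he
          have hgz : g z = g1' z := if_pos h
          rw [hgz, hm.1, ← hm.2]
        · exact if_neg h
  · -- EqOn g f A
    intro a ha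
    by_cases h : u a ≤ 1/2
    · have hga : g a = g1' a := if_pos h
      rw [hga, hg1'A1 a (Or.inl ⟨ha, h⟩), hg0'A ha]
    · have h' : 1/2 ≤ u a := le_of_not_ge h
      have hga : g a = g2' a := if_neg h
      rw [hga, hg2'A2 a (Or.inl ⟨ha, h'⟩), hg0'A ha]
  · -- image
    rintro _ ⟨z, hz, rfl⟩
    by_cases h : u z ≤ 1/2
    · have hgz : g z = g1' z := if_pos h
      rw [hgz]
      exact Or.inl (hg1'P z (by rw [hvalU1]; exact hsub1 ⟨hz, h⟩))
    · have h' : (1:ℝ)/2 ≤ u z := le_of_not_ge h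
      have hgz : g z = g2' z := if_neg h
      rw [hgz]
      exact Or.inr (hg2'P z (by rw [hvalU2]; exact hsub2 ⟨hz, h'⟩))


theorem ANEIn_empty {S : Type*} [TopologicalSpace S] : ANEIn (∅ : Set S) := by
  intro Z mZ A hA f hf hfP
  have hAe : A = ∅ := by
    by_contra h
    obtain ⟨a, ha⟩ := nonempty_iff_ne_empty.mpr h
    exact absurd (hfP ⟨a, ha, rfl⟩) (notMem_empty _)
  subst hAe
  exact ⟨∅, f, isOpen_empty, subset_rfl, continuousOn_empty f, fun a ha => rfl, by simp⟩

theorem ANEIn_univ (M : Type*) [TopologicalSpace M] [ChartedSpace H2 M] [CompactSpace M] :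
    ANEIn (univ : Set M) := by
  have hcov : (univ : Set M) ⊆ ⋃ x : M, (chartAt H2 x).source :=
    fun x _ => mem_iUnion.mpr ⟨x, mem_chart_source H2 x⟩
  obtain ⟨t, ht⟩ := isCompact_univ.elim_finite_subcover
    (fun x : M => (chartAt H2 x).source) (fun x => (chartAt H2 x).open_source) hcov
  classical
  have key : ∀ s : Finset M, ANEIn (⋃ x ∈ s, (chartAt H2 x).source) := by
    intro s
    induction s using Finset.induction_on with
    | empty => simpa using (ANEIn_empty (S := M))
    | @insert a s ha ih =>
      rw [Finset.set_biUnion_insert]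
      have hQo : IsOpen (⋃ x ∈ s, (chartAt H2 x).source) :=
        isOpen_biUnion fun x _ => (chartAt H2 x).open_source
      refine ANEIn.union (chartAt H2 a).open_source hQo
        (chart_ANEIn (chartAt H2 a) (chartAt H2 a).open_source subset_rfl) ih
        (chart_ANEIn (chartAt H2 a) ((chartAt H2 a).open_source.inter hQo)
          inter_subset_left)
  have huniv : (⋃ x ∈ t, (chartAt H2 x).source) = univ := eq_univ_of_univ_subset ht
  rw [← huniv]
  exact key t

theorem ANEIn_univ_of_homeo {S T : Type*} [TopologicalSpace S] [TopologicalSpace T]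
    (h : S ≃ₜ T) (hS : ANEIn (univ : Set S)) : ANEIn (univ : Set T) := by
  intro Z mZ A hA f hf _
  obtain ⟨U, g, hUo, hAU, hgc, hge, _⟩ :=
    hS Z mZ A hA (fun z => h.symm (f z)) (h.symm.continuous.comp_continuousOn hf)
      (subset_univ _)
  refine ⟨U, fun z => h (g z), hUo, hAU, h.continuous.comp_continuousOn hgc, ?_, subset_univ _⟩
  intro a ha
  simp [hge ha]


end ANE

/-- Lemma 2.2: for a compact metric surface `X` and a family of
`(1/n)`-thickenings `Y n` of `X`, some thickening admits a continuous retraction onto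
`X`. -/
theorem exists_retraction_of_thickening
    (M : Type) [TopologicalSpace M] [T2Space M] [CompactSpace M] [ConnectedSpace M]
    [ChartedSpace (EuclideanHalfSpace 2) M] [IsManifold (𝓡∂ 2) (⊤ : ℕ∞) M]
    (X : Type) [MetricSpace X] [CompactSpace X]
    (hhomeo : Nonempty (M ≃ₜ X))
    (Y : ℕ → Type) [mY : ∀ n, MetricSpace (Y n)]
    (ι : ∀ n, X → Y n)
    (hthick : ∀ n : ℕ, 0 < n → IsThickening (1 / (n : ℝ≥0∞)) (ι n)) :
    ∃ n : ℕ, 0 < n ∧ ∃ R : Y n → X, Continuous R ∧ ∀ x : X, R (ι n x) = x := by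
  classical
  have hX_ANE : ANEIn (univ : Set X) := ANEIn_univ_of_homeo hhomeo.some (ANEIn_univ M)
  haveI : Nonempty M := inferInstance
  haveI : Nonempty X := ⟨hhomeo.some (Classical.arbitrary M)⟩
  -- Kuratowski-type embedding of X into the bounded continuous functions on X
  set κ : X → (BoundedContinuousFunction X ℝ) := fun a =>
    BoundedContinuousFunction.mkOfCompact ⟨fun x => dist a x, continuous_const.dist continuous_id⟩
    with hκ_def
  have hκapp : ∀ a x, κ a x = dist a x := fun a x => rfl
  have hκiso : Isometry κ := by
    refine Isometry.of_dist_eq fun a b => le_antisymm ?_ ?_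
    · refine (BoundedContinuousFunction.dist_le dist_nonneg).mpr fun x => ?_
      rw [hκapp, hκapp, Real.dist_eq]
      exact abs_dist_sub_le a b x
    · have h1 := BoundedContinuousFunction.dist_coe_le_dist (f := κ a) (g := κ b) b
      rw [hκapp, hκapp, Real.dist_eq, dist_self, sub_zero, abs_of_nonneg dist_nonneg] at h1
      exact h1
  have hκcont : Continuous κ := hκiso.continuous
  have hKcomp : IsCompact (Set.range κ) := isCompact_range hκcont
  have hKclosed : IsClosed (Set.range κ) := hKcomp.isClosed
  -- the partial inverse of κ
  have hemb : Topology.IsEmbedding κ := hκiso.isEmbedding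
  set e : X ≃ₜ Set.range κ := hemb.toHomeomorph with he_def
  set f : (BoundedContinuousFunction X ℝ) → X := fun w =>
    if h : w ∈ Set.range κ then e.symm ⟨w, h⟩ else Classical.arbitrary X with hf_def
  have hfκ : ∀ a : X, f (κ a) = a := by
    intro a
    have h : κ a ∈ Set.range κ := ⟨a, rfl⟩
    have h2 : (⟨κ a, h⟩ : ↥(Set.range κ)) = e a := rfl
    simp only [hf_def, dif_pos h, h2, Homeomorph.symm_apply_apply]
  have hfc : ContinuousOn f (Set.range κ) := by
    have h1 : ContinuousOn (fun w : ↥(Set.range κ) => e.symm w) (univ : Set ↥(Set.range κ)) :=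
      e.symm.continuous.continuousOn
    have h2 := continuousOn_image_val h1 f (fun x => by rw [hf_def]; exact dif_pos x.2)
    rwa [Subtype.coe_image_univ] at h2
  -- extend the inverse of κ to a neighborhood of the range
  obtain ⟨U, g, hUo, hAU, hgc, hge, -⟩ :=
    hX_ANE (BoundedContinuousFunction X ℝ) inferInstance (Set.range κ) hKclosed f hfc (subset_univ _)
  obtain ⟨ε, hε, hthk⟩ := hKcomp.exists_thickening_subset_open hUo hAU
  obtain ⟨k, hk⟩ := exists_nat_one_div_lt hε
  set n : ℕ := k + 1 with hn_def
  have hn : 0 < n := Nat.succ_pos k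
  have hιiso : Isometry (ι n) := (hthick n hn).1
  -- the Lipschitz extension of κ over the thickening
  set F : Y n → (BoundedContinuousFunction X ℝ) := fun y =>
    BoundedContinuousFunction.mkOfCompact
      ⟨fun x => dist y (ι n x), continuous_const.dist hιiso.continuous⟩ with hF_def
  have hFapp : ∀ y x, F y x = dist y (ι n x) := fun y x => rfl
  have hFκ : ∀ a : X, F (ι n a) = κ a := by
    intro a
    ext x
    rw [hFapp, hκapp, hιiso.dist_eq]
  have hFlip : LipschitzWith 1 F := by
    refine LipschitzWith.of_dist_le_mul fun y y' => ?_
    rw [NNReal.coe_one, one_mul]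
    refine (BoundedContinuousFunction.dist_le dist_nonneg).mpr fun x => ?_
    rw [hFapp, hFapp, Real.dist_eq]
    exact abs_dist_sub_le y y' (ι n x)
  -- every point of the thickening lands in U
  have hFU : ∀ y : Y n, F y ∈ U := by
    intro y
    have h1 : EMetric.infEdist y (Set.range (ι n)) < 1 / (n : ℝ≥0∞) := by
      refine lt_of_le_of_lt ?_ (hthick n hn).2
      rw [EMetric.hausdorffEdist, Metric.hausdorffEDist_comm]
      exact EMetric.infEdist_le_hausdorffEdist_of_mem (mem_univ y)
    obtain ⟨_, ⟨a, rfl⟩, ha⟩ := EMetric.infEdist_lt_iff.mp h1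
    have h2 : (1 : ℝ≥0∞) / (n : ℝ≥0∞) = ENNReal.ofReal (1 / (n : ℝ)) := by
      rw [one_div, one_div, ← ENNReal.ofReal_natCast n, ← ENNReal.ofReal_inv_of_pos]
      exact_mod_cast hn
    rw [h2] at ha
    have h3 : dist y (ι n a) < 1 / (n : ℝ) := by
      rw [← edist_lt_ofReal]
      exact ha
    have h4 : dist (F y) (κ a) ≤ dist y (ι n a) := by
      refine (BoundedContinuousFunction.dist_le dist_nonneg).mpr fun x => ?_
      rw [hFapp, hκapp, ← hιiso.dist_eq a x, Real.dist_eq]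
      exact abs_dist_sub_le y (ι n a) (ι n x)
    have h6 : (1 : ℝ) / n < ε := by
      have : ((n : ℝ)) = (k : ℝ) + 1 := by rw [hn_def]; push_cast; ring
      rw [this]
      exact hk
    have h5 : dist (F y) (κ a) < ε := lt_of_le_of_lt h4 (lt_trans h3 h6)
    refine hthk ?_
    rw [Metric.mem_thickening_iff]
    exact ⟨κ a, ⟨a, rfl⟩, h5⟩
  refine ⟨n, hn, fun y => g (F y), ?_, ?_⟩
  · refine continuous_iff_continuousAt.mpr fun y => ?_
    exact (hgc.continuousAt (hUo.mem_nhds (hFU y))).comp hFlip.continuous.continuousAt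
  · intro x
    show g (F (ι n x)) = x
    rw [hFκ x, hge ⟨x, rfl⟩, hfκ x]
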